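/- For every u ∈ X with 0 < ‖u‖ ≤ 2ρ and ψ(u) ≥ 0, there exists a unique τ̄ = τ̄(u) ∈ (0,1] such that ψ(τ̄·u) = 0; moreover ψ(τ·u) < 0 for all τ ∈ (0, τ̄) and ψ(τ·u) > 0 for all τ ∈ (τ̄, 2ρ/‖u‖]. -/

import Mathlib

/-- (3.30)-(3.31) in the proof of Lemma 5: for `u` with `0 < ‖u‖ ≤ 2ρ` and `ψ(u) ≥ 0`
there is a unique `τ̄ ∈ (0,1]` with `ψ(τ̄u) = 0`; moreover `ψ(τu) < 0` on `(0,τ̄)` and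
`ψ(τu) > 0` on `(τ̄, 2ρ/‖u‖]`. -/
theorem stmt_7 {X : Type*} [NormedAddCommGroup X] [NormedSpace ℝ X]
    (ρ : ℝ) (hρ : 0 < ρ) (ψ : X → ℝ) (hψ : ContDiff ℝ 1 ψ) (hψ0 : ψ 0 = 0)
    (H1 : ∀ v : X, 0 < ‖v‖ → ‖v‖ ≤ 2 * ρ → 0 ≤ ψ v → 0 < fderiv ℝ ψ v v)
    (H2 : ∀ u : X, u ≠ 0 → ∀ᶠ τ in nhdsWithin (0:ℝ) (Set.Ioi 0), ψ (τ • u) < 0) :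
    ∀ u : X, 0 < ‖u‖ → ‖u‖ ≤ 2 * ρ → 0 ≤ ψ u →
      ∃ τb ∈ Set.Ioc (0:ℝ) 1, ψ (τb • u) = 0 ∧
        (∀ τ ∈ Set.Ioc (0:ℝ) 1, ψ (τ • u) = 0 → τ = τb) ∧
        (∀ τ ∈ Set.Ioo (0:ℝ) τb, ψ (τ • u) < 0) ∧
        (∀ τ ∈ Set.Ioc τb (2 * ρ / ‖u‖), 0 < ψ (τ • u)) := by
  intro u hu hu2 hψu
  have hune : u ≠ 0 := norm_pos_iff.mp hu
  set g : ℝ → ℝ := fun τ => ψ (τ • u) with hgdef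
  set T : ℝ := 2 * ρ / ‖u‖ with hTdef
  have hT1 : (1:ℝ) ≤ T := (one_le_div hu).mpr hu2
  have hgc : Continuous g := hψ.continuous.comp (continuous_id.smul continuous_const)
  have hderiv : ∀ τ : ℝ, HasDerivAt g (fderiv ℝ ψ (τ • u) u) τ := by
    intro τ
    have h1 : HasDerivAt (fun x : ℝ => x • u) ((1:ℝ) • u) τ := (hasDerivAt_id τ).smul_const u
    have h2 : HasFDerivAt ψ (fderiv ℝ ψ (τ • u)) (τ • u) :=
      (hψ.differentiable one_ne_zero (τ • u)).hasFDerivAt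
    have h3 := h2.comp_hasDerivAt τ h1
    rw [one_smul] at h3
    exact h3
  have hkey : ∀ τ : ℝ, 0 < τ → τ ≤ T → 0 ≤ g τ → 0 < fderiv ℝ ψ (τ • u) u := by
    intro τ hτ hτT hgτ
    have hτ2 : τ * ‖u‖ ≤ 2 * ρ := (le_div_iff₀ hu).mp hτT
    have hnorm : ‖τ • u‖ = τ * ‖u‖ := by rw [norm_smul, Real.norm_of_nonneg hτ.le]
    have h := H1 (τ • u) (by rw [hnorm]; positivity) (by rw [hnorm]; exact hτ2) hgτ
    rw [map_smul, smul_eq_mul] at h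
    by_contra hc
    push_neg at hc
    nlinarith
  obtain ⟨ε, hε0, hεneg⟩ : ∃ ε > 0, ∀ τ ∈ Set.Ioo (0:ℝ) ε, g τ < 0 := by
    have h := (H2 u hune)
    rw [(nhdsGT_basis (0:ℝ)).eventually_iff] at h
    obtain ⟨ε, hε, h⟩ := h
    exact ⟨ε, hε, fun τ hτ => h hτ⟩
  set S : Set ℝ := {τ | τ ∈ Set.Ioc (0:ℝ) 1 ∧ 0 ≤ g τ} with hSdef
  have h1S : (1:ℝ) ∈ S := ⟨⟨one_pos, le_rfl⟩, by simpa [hgdef] using hψu⟩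
  have hSne : S.Nonempty := ⟨1, h1S⟩
  have hSb : BddBelow S := ⟨0, fun τ hτ => hτ.1.1.le⟩
  set τb : ℝ := sInf S with hτbdef
  have hτb_le1 : τb ≤ 1 := csInf_le hSb h1S
  have hτb0 : 0 < τb := by
    have : min ε 1 ≤ τb := by
      apply le_csInf hSne
      intro τ hτ
      by_contra hc
      push_neg at hc
      have hτε : τ < ε := lt_of_lt_of_le hc (min_le_left _ _)
      exact absurd (hεneg τ ⟨hτ.1.1, hτε⟩) (not_lt.mpr hτ.2)
    exact lt_of_lt_of_le (lt_min hε0 one_pos) this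
  have hneg : ∀ τ ∈ Set.Ioo (0:ℝ) τb, g τ < 0 := by
    intro τ hτ
    have hnS : τ ∉ S := fun hmem => absurd (csInf_le hSb hmem) (not_le.mpr hτ.2)
    by_contra hc
    push_neg at hc
    exact hnS ⟨⟨hτ.1, le_trans hτ.2.le hτb_le1⟩, hc⟩
  have hge : 0 ≤ g τb := by
    have hcl : closure S ⊆ {τ | 0 ≤ g τ} :=
      closure_minimal (fun τ hτ => hτ.2) (isClosed_le continuous_const hgc)
    exact hcl (csInf_mem_closure hSne hSb)
  have hle : g τb ≤ 0 := by
    have h2 : closure (Set.Ioo (0:ℝ) τb) ⊆ {τ | g τ ≤ 0} :=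
      closure_minimal (fun τ hτ => (hneg τ hτ).le) (isClosed_le hgc continuous_const)
    have hmem : τb ∈ closure (Set.Ioo (0:ℝ) τb) := by
      rw [closure_Ioo (ne_of_lt hτb0)]
      exact ⟨hτb0.le, le_rfl⟩
    exact h2 hmem
  have gzero : g τb = 0 := le_antisymm hle hge
  -- Claim A : no negative values on (τb, T]
  have claimA : ∀ s ∈ Set.Ioc τb T, ¬ g s < 0 := by
    intro s hs hsneg
    set Z : Set ℝ := Set.Icc τb s ∩ {τ | g τ = 0} with hZdef
    have hZne : Z.Nonempty := ⟨τb, ⟨le_rfl, hs.1.le⟩, gzero⟩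
    have hZbd : BddAbove Z := ⟨s, fun τ hτ => hτ.1.2⟩
    have hZcl : IsClosed Z := isClosed_Icc.inter (isClosed_eq hgc continuous_const)
    set c : ℝ := sSup Z with hcdef
    have hcZ : c ∈ Z := hZcl.csSup_mem hZne hZbd
    have gc : g c = 0 := hcZ.2
    have hcs : c < s := lt_of_le_of_ne hcZ.1.2 (fun h => by rw [h] at gc; exact absurd gc hsneg.ne)
    have hc0 : 0 < c := lt_of_lt_of_le hτb0 hcZ.1.1
    have hneg2 : ∀ τ ∈ Set.Ioc c s, g τ < 0 := by
      intro τ hτ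
      rcases lt_trichotomy (g τ) 0 with h|h|h
      · exact h
      · exact absurd (le_csSup hZbd ⟨⟨le_trans hcZ.1.1 hτ.1.le, hτ.2⟩, h⟩) (not_le.mpr hτ.1)
      · have hτs : τ < s := lt_of_le_of_ne hτ.2 (fun he => by rw [he] at h; linarith)
        have hiv : Set.Ioo (g s) (g τ) ⊆ g '' Set.Ioo τ s :=
          intermediate_value_Ioo' hτs.le hgc.continuousOn
        obtain ⟨z, hz, hz0⟩ := hiv ⟨hsneg, h⟩
        have hzZ : z ∈ Z := ⟨⟨le_trans hcZ.1.1 (le_trans hτ.1.le hz.1.le), hz.2.le⟩, hz0⟩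
        exact absurd (le_csSup hZbd hzZ) (not_le.mpr (lt_trans hτ.1 hz.1))
    have hd : 0 < fderiv ℝ ψ (c • u) u :=
      hkey c hc0 (le_trans hcZ.1.2 hs.2) (le_of_eq gc.symm)
    have hslope : Filter.Tendsto (slope g c) (nhdsWithin c {c}ᶜ) (nhds (fderiv ℝ ψ (c • u) u)) :=
      hasDerivAt_iff_tendsto_slope.mp (hderiv c)
    have hev : ∀ᶠ y in nhdsWithin c (Set.Ioi c), 0 < slope g c y := by
      have h1 : ∀ᶠ y in nhdsWithin c {c}ᶜ, 0 < slope g c y :=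
        hslope.eventually (eventually_gt_nhds hd)
      exact h1.filter_mono (nhdsWithin_mono c (fun y hy => ne_of_gt hy))
    have hmem : Set.Ioc c s ∈ nhdsWithin c (Set.Ioi c) :=
      Ioc_mem_nhdsGT_of_mem ⟨le_rfl, hcs⟩
    obtain ⟨y, hy1, hy2⟩ := (hev.and (Filter.eventually_of_mem hmem (fun y hy => hy))).exists
    rw [slope_def_field, gc, sub_zero] at hy1
    have hyc : 0 < y - c := sub_pos.mpr hy2.1
    have hgy : 0 < g y := by
      rcases div_pos_iff.mp hy1 with ⟨h1, _⟩ | ⟨_, h2⟩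
      · exact h1
      · linarith
    exact absurd (hneg2 y hy2) (not_lt.mpr hgy.le)
  -- Claim B : no zeros on (τb, T]
  have claimB : ∀ t ∈ Set.Ioc τb T, g t ≠ 0 := by
    intro t ht hgt
    have hd : 0 < fderiv ℝ ψ (t • u) u :=
      hkey t (lt_trans hτb0 ht.1) ht.2 (le_of_eq hgt.symm)
    have hslope : Filter.Tendsto (slope g t) (nhdsWithin t {t}ᶜ) (nhds (fderiv ℝ ψ (t • u) u)) :=
      hasDerivAt_iff_tendsto_slope.mp (hderiv t)
    have hev : ∀ᶠ y in nhdsWithin t (Set.Iio t), 0 < slope g t y := by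
      have h1 : ∀ᶠ y in nhdsWithin t {t}ᶜ, 0 < slope g t y :=
        hslope.eventually (eventually_gt_nhds hd)
      exact h1.filter_mono (nhdsWithin_mono t (fun y hy => ne_of_lt hy))
    have hmem : Set.Ioo τb t ∈ nhdsWithin t (Set.Iio t) :=
      Ioo_mem_nhdsLT_of_mem ⟨ht.1, le_rfl⟩
    obtain ⟨y, hy1, hy2⟩ := (hev.and (Filter.eventually_of_mem hmem (fun y hy => hy))).exists
    rw [slope_def_field, hgt, sub_zero] at hy1
    have hyt : y - t < 0 := sub_neg.mpr hy2.2
    have hgy : g y < 0 := by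
      rcases div_pos_iff.mp hy1 with ⟨_, h2⟩ | ⟨h1, _⟩
      · linarith
      · exact h1
    exact claimA y ⟨hy2.1, le_trans hy2.2.le ht.2⟩ hgy
  have gpos : ∀ τ ∈ Set.Ioc τb T, 0 < g τ := by
    intro τ hτ
    rcases lt_trichotomy (g τ) 0 with h|h|h
    · exact absurd h (claimA τ hτ)
    · exact absurd h (claimB τ hτ)
    · exact h
  refine ⟨τb, ⟨hτb0, hτb_le1⟩, gzero, ?_, hneg, gpos⟩
  intro τ hτ hτ0
  rcases lt_trichotomy τ τb with h|h|h
  · exact absurd hτ0 (hneg τ ⟨hτ.1, h⟩).ne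
  · exact h
  · exact absurd hτ0 (gpos τ ⟨h, le_trans hτ.2 hT1⟩).ne'
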